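/- Let k ≥ n ≥ 3. Then for every m ≥ 0, q(m+1) = F_{n,k} + Σ_{i=1}^n F_{n,k+i}·N_{a_i}(m); equivalently, X_{n,k} = { F_{n,k} + Σ_{i=1}^n F_{n,k+i}·N_{a_i}(m) : m ≥ 0 }. -/

import Mathlib

/-- `L` encodes an `n`-decomposition of `x`: indices at least `n`, consecutive
gaps at least `n`, summing (via `F`) to `x`. -/
def IsDecompOf (n : ℕ) (F : ℕ → ℕ) (L : List ℕ) (x : ℕ) : Prop :=
  (∀ c ∈ L, n ≤ c) ∧ L.Chain' (fun a b => a + n ≤ b) ∧ (L.map F).sum = x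

/-- `x` is a positive integer whose `n`-decomposition has `F k` as its
smallest summand (i.e. `k` is the smallest index used). -/
def MemXnk (n k : ℕ) (F : ℕ → ℕ) (x : ℕ) : Prop :=
  0 < x ∧ ∃ L : List ℕ, IsDecompOf n F L x ∧ k ∈ L ∧ ∀ c ∈ L, k ≤ c

/-- Let `k ≥ n ≥ 3`, let `W = S_∞` be the infinite `n`-string with
`N_{a_i}(m) = ((List.range m).map W).count i`, and let `q 1 < q 2 < ⋯`
enumerate the positive integers whose `n`-decomposition has `F k` as smallest
summand.  Then for every `m ≥ 0`,
`q (m+1) = F k + Σ_{i=1}^n F (k+i) · N_{a_i}(m)`. -/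
theorem q_formula (n k : ℕ) (hn : 3 ≤ n) (hk : n ≤ k)
    (F : ℕ → ℕ)
    (hF1 : ∀ i, 1 ≤ i → i ≤ n → F i = 1)
    (hFrec : ∀ m, n ≤ m → F (m + 1) = F m + F (m + 1 - n))
    (S : ℕ → List ℕ)
    (hS1 : ∀ i, 1 ≤ i → i ≤ n → S i = [i])
    (hSrec : ∀ m, n ≤ m → S (m + 1) = S m ++ S (m + 1 - n))
    (W : ℕ → ℕ)
    (hW : ∀ m, n ≤ m → S m = (List.range (S m).length).map W)
    (q : ℕ → ℕ)
    (hq_mem : ∀ r, 1 ≤ r → MemXnk n k F (q r))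
    (hq_mono : ∀ r, 1 ≤ r → q r < q (r + 1))
    (hq_surj : ∀ x, MemXnk n k F x → ∃ r, 1 ≤ r ∧ q r = x) :
    ∀ m : ℕ, q (m + 1)
      = F k + ∑ i ∈ Finset.Icc 1 n, F (k + i) * ((List.range m).map W).count i := by
  classical
  -- F is positive on positive indices
  have Fpos : ∀ c, 1 ≤ c → 1 ≤ F c := by
    intro c
    induction c using Nat.strong_induction_on with
    | _ c ih =>
      intro hc
      by_cases h : c ≤ n
      · rw [hF1 c hc h]
      · have h1 : n ≤ c - 1 := by omega
        have h2 := hFrec (c - 1) h1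
        have h3 : c - 1 + 1 = c := by omega
        rw [h3] at h2
        have h4 := ih (c - 1) (by omega) (by omega)
        omega
  -- F is monotone on positive indices
  have Fstep : ∀ d, 1 ≤ d → F d ≤ F (d + 1) := by
    intro d hd
    by_cases h : d < n
    · rw [hF1 d hd (by omega), hF1 (d + 1) (by omega) (by omega)]
    · have := hFrec d (by omega); omega
  have Fmono : ∀ c d, 1 ≤ c → c ≤ d → F c ≤ F d := by
    intro c d hc hcd
    induction d, hcd using Nat.le_induction with
    | base => exact le_rfl
    | succ d hd ih => exact le_trans ih (Fstep d (by omega))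
  -- F grows at least linearly
  have Fgrow : ∀ j, j + 1 ≤ F (n + j) := by
    intro j
    induction j with
    | zero => simp [hF1 n (by omega) le_rfl]
    | succ j ih =>
      have h := hFrec (n + j) (by omega)
      have h2 : n + j + 1 - n = j + 1 := by omega
      rw [h2] at h
      have h3 := Fpos (j + 1) (by omega)
      have heq : n + (j + 1) = n + j + 1 := by omega
      rw [heq]
      omega
  -- length of S c is F c
  have Slen : ∀ c, 1 ≤ c → (S c).length = F c := by
    intro c
    induction c using Nat.strong_induction_on with
    | _ c ih =>
      intro hc
      by_cases h : c ≤ n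
      · rw [hS1 c hc h, hF1 c hc h]
        rfl
      · have h1 : n ≤ c - 1 := by omega
        have h2 := hSrec (c - 1) h1
        have hF := hFrec (c - 1) h1
        have h3 : c - 1 + 1 = c := by omega
        rw [h3] at h2 hF
        rw [h2, List.length_append, ih (c - 1) (by omega) (by omega),
          ih (c - n) (by omega) (by omega)]
        omega
  -- letters of S c are in [1, n]
  have Sletters : ∀ c, 1 ≤ c → ∀ j ∈ S c, 1 ≤ j ∧ j ≤ n := by
    intro c
    induction c using Nat.strong_induction_on with
    | _ c ih =>
      intro hc j hj
      by_cases h : c ≤ n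
      · rw [hS1 c hc h] at hj
        simp only [List.mem_singleton] at hj
        omega
      · have h1 : n ≤ c - 1 := by omega
        have h2 := hSrec (c - 1) h1
        have h3 : c - 1 + 1 = c := by omega
        rw [h3] at h2
        rw [h2, List.mem_append] at hj
        rcases hj with hj | hj
        · exact ih (c - 1) (by omega) (by omega) j hj
        · exact ih (c - n) (by omega) (by omega) j hj
  -- S a is a prefix of S b for n ≤ a ≤ b
  have Spre : ∀ a b, n ≤ a → a ≤ b → S a <+: S b := by
    intro a b ha hab
    induction b, hab using Nat.le_induction with
    | base => exact List.prefix_rfl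
    | succ b hb ih =>
      rw [hSrec b (by omega)]
      exact ih.trans (List.prefix_append _ _)
  -- key letter-count identity for single blocks
  have sumA : ∀ c, 1 ≤ c →
      ∑ i ∈ Finset.Icc 1 n, F (k + i) * (S c).count i = F (k + c) := by
    intro c
    induction c using Nat.strong_induction_on with
    | _ c ih =>
      intro hc
      by_cases h : c ≤ n
      · rw [hS1 c hc h]
        have hcnt : ∀ i ∈ Finset.Icc 1 n, F (k + i) * List.count i [c]
            = if i = c then F (k + i) else 0 := by
          intro i _
          rw [List.count_singleton]
          by_cases hic : i = c
          · subst hic; simp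
          · simp [hic, Ne.symm hic]
        rw [Finset.sum_congr rfl hcnt,
          Finset.sum_ite_eq' (Finset.Icc 1 n) c (fun i => F (k + i)),
          if_pos (Finset.mem_Icc.mpr ⟨hc, h⟩)]
      · obtain ⟨d, rfl⟩ : ∃ d, c = d + 1 := ⟨c - 1, by omega⟩
        have hd : n ≤ d := by omega
        rw [hSrec d hd]
        have hsplit : ∀ i ∈ Finset.Icc 1 n,
            F (k + i) * (S d ++ S (d + 1 - n)).count i
              = F (k + i) * (S d).count i + F (k + i) * (S (d + 1 - n)).count i := by
          intro i _
          rw [List.count_append]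
          ring
        rw [Finset.sum_congr rfl hsplit, Finset.sum_add_distrib,
          ih d (by omega) (by omega), ih (d + 1 - n) (by omega) (by omega)]
        have hF := hFrec (k + d) (by omega)
        have he1 : k + d + 1 - n = k + (d + 1 - n) := by omega
        have he2 : k + (d + 1) = k + d + 1 := by omega
        rw [he2, hF, he1]
  -- existence of decompositions (greedy)
  have exD : ∀ m, ∃ E : List ℕ, (∀ c ∈ E, n ≤ c) ∧ E.Pairwise (fun a b => b + n ≤ a) ∧
      (∀ c ∈ E, F c ≤ m) ∧ (E.map F).sum = m := by
    intro m
    induction m using Nat.strong_induction_on with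
    | _ m ih =>
      rcases Nat.eq_zero_or_pos m with rfl | hm
      · exact ⟨[], by simp, by simp, by simp, by simp⟩
      · set r := Nat.findGreatest (fun t => F t ≤ m) (n + m) with hr
        have hPn : F n ≤ m := by rw [hF1 n (by omega) le_rfl]; omega
        have hrn : n ≤ r :=
          Nat.le_findGreatest (P := fun t => F t ≤ m) (n := n + m) (by omega) hPn
        have hFr : F r ≤ m :=
          Nat.findGreatest_spec (P := fun t => F t ≤ m) (n := n + m) (m := n) (by omega) hPn
        have hrlt : r < n + m := by
          rcases Nat.lt_or_ge r (n + m) with h | h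
          · exact h
          · exfalso
            have h1 : r = n + m := le_antisymm (Nat.findGreatest_le _) h
            have h2 := Fgrow m
            rw [h1] at hFr
            omega
        have hFr1 : ¬ (F (r + 1) ≤ m) :=
          Nat.findGreatest_is_greatest (P := fun t => F t ≤ m) (n := n + m) (by omega) (by omega)
        have hrec := hFrec r hrn
        have hm' : m - F r < F (r + 1 - n) := by omega
        obtain ⟨E', h1, h2, h3, h4⟩ := ih (m - F r) (by have := Fpos r (by omega); omega)
        have hbound : ∀ c ∈ E', c + n ≤ r := by
          intro c hcE
          by_contra hcon
          have hcr : r + 1 - n ≤ c := by omega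
          have hm1 := Fmono (r + 1 - n) c (by omega) hcr
          have hm2 := h3 c hcE
          omega
        refine ⟨r :: E', ?_, ?_, ?_, ?_⟩
        · intro c hcE
          rcases List.mem_cons.mp hcE with rfl | hc
          · exact hrn
          · exact h1 c hc
        · exact List.pairwise_cons.mpr ⟨fun c hc => hbound c hc, h2⟩
        · intro c hcE
          rcases List.mem_cons.mp hcE with rfl | hc
          · exact hFr
          · have := h3 c hc; omega
        · simp only [List.map_cons, List.sum_cons, h4]
          omega
  -- concatenated blocks form prefixes
  have join_prefix : ∀ E : List ℕ, (∀ c ∈ E, n ≤ c) → E.Pairwise (fun a b => b + n ≤ a) →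
      ∀ b, (∀ c ∈ E, c ≤ b) → (E.map S).flatten <+: S (b + 1) := by
    intro E
    induction E with
    | nil => intro _ _ b _; simp
    | cons c E' ih =>
      intro hn' hp b hb
      have hc : n ≤ c := hn' c (List.mem_cons_self)
      have hcb : c ≤ b := hb c (List.mem_cons_self)
      obtain ⟨hhead, htail⟩ := List.pairwise_cons.mp hp
      have hih := ih (fun x hx => hn' x (List.mem_cons_of_mem _ hx)) htail (c - n)
        (fun x hx => by have := hhead x hx; omega)
      have heq : c - n + 1 = c + 1 - n := by omega
      rw [heq] at hih
      have h1 : S c ++ (E'.map S).flatten <+: S c ++ S (c + 1 - n) := by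
        obtain ⟨t, ht⟩ := hih
        exact ⟨t, by rw [List.append_assoc, ht]⟩
      rw [← hSrec c hc] at h1
      have h2 := Spre (c + 1) (b + 1) (by omega) (by omega)
      simpa using h1.trans h2
  -- the prefix of W determined by a decomposition is the join of blocks
  have word_eq : ∀ E : List ℕ, (∀ c ∈ E, n ≤ c) → E.Pairwise (fun a b => b + n ≤ a) →
      (List.range ((E.map F).sum)).map W = (E.map S).flatten := by
    intro E hEn hEp
    set m := (E.map F).sum with hm
    have hFle : ∀ c ∈ E, F c ≤ m := by
      intro c hc
      exact List.single_le_sum (by simp) (F c) (List.mem_map_of_mem (f := F) hc)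
    have hcb : ∀ c ∈ E, c ≤ n + m := by
      intro c hc
      have h1 := Fgrow (c - n)
      have h2 : n + (c - n) = c := by have := hEn c hc; omega
      rw [h2] at h1
      have := hFle c hc
      omega
    have hpre := join_prefix E hEn hEp (n + m) hcb
    have hlen : ((E.map S).flatten).length = m := by
      rw [List.length_flatten, List.map_map, hm]
      congr 1
      exact List.map_congr_left (fun c hc => Slen c (by have := hEn c hc; omega))
    have hmlt : m < F (n + m + 1) := by
      have h1 := Fgrow (m + 1)
      have h2 : n + (m + 1) = n + m + 1 := by omega
      rw [h2] at h1
      omega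
    have hSW := hW (n + m + 1) (by omega)
    rw [Slen (n + m + 1) (by omega)] at hSW
    have hpe := List.prefix_iff_eq_take.mp hpre
    rw [hlen, hSW] at hpe
    rw [hpe, ← List.map_take, List.take_range, min_eq_left hmlt.le]
  -- counting letters in a join of blocks
  have sum_join : ∀ E : List ℕ, (∀ c ∈ E, 1 ≤ c) →
      ∑ i ∈ Finset.Icc 1 n, F (k + i) * ((E.map S).flatten).count i
        = (E.map (fun c => F (k + c))).sum := by
    intro E
    induction E with
    | nil => simp
    | cons c E' ih =>
      intro hE
      have hc := hE c (List.mem_cons_self)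
      simp only [List.map_cons, List.flatten_cons, List.count_append, List.sum_cons]
      rw [← ih (fun x hx => hE x (List.mem_cons_of_mem _ hx)), ← sumA c hc,
        ← Finset.sum_add_distrib]
      exact Finset.sum_congr rfl (fun i _ => by ring)
  -- the master identity
  have starstar : ∀ E : List ℕ, (∀ c ∈ E, n ≤ c) → E.Pairwise (fun a b => b + n ≤ a) →
      ∑ i ∈ Finset.Icc 1 n, F (k + i) * ((List.range ((E.map F).sum)).map W).count i
        = (E.map (fun c => F (k + c))).sum := by
    intro E hEn hEp
    rw [word_eq E hEn hEp]
    exact sum_join E (fun c hc => by have := hEn c hc; omega)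
  set Gf : ℕ → ℕ :=
    fun m => F k + ∑ i ∈ Finset.Icc 1 n, F (k + i) * ((List.range m).map W).count i
    with hGf
  -- letters of W are in [1, n]
  have Wmem : ∀ m, 1 ≤ W m ∧ W m ≤ n := by
    intro m
    have hlen := Slen (n + (m + 1)) (by omega)
    have hSW := hW (n + (m + 1)) (by omega)
    have hmlt : m < (S (n + (m + 1))).length := by
      rw [hlen]
      have := Fgrow (m + 1)
      omega
    have hmem : W m ∈ S (n + (m + 1)) := by
      rw [hSW]
      exact List.mem_map.mpr ⟨m, List.mem_range.mpr hmlt, rfl⟩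
    exact Sletters _ (by omega) (W m) hmem
  -- Gf grows by F (k + W m)
  have Gstep : ∀ m, Gf (m + 1) = Gf m + F (k + W m) := by
    intro m
    simp only [hGf]
    rw [List.range_succ, List.map_append, List.map_cons, List.map_nil]
    have hcnt : ∀ i, List.count i [W m] = if i = W m then 1 else 0 := by
      intro i
      rw [List.count_singleton]
      by_cases h : i = W m
      · subst h; simp
      · simp [h, Ne.symm h]
    have key : ∑ i ∈ Finset.Icc 1 n,
        F (k + i) * (((List.range m).map W) ++ [W m]).count i
        = (∑ i ∈ Finset.Icc 1 n, F (k + i) * ((List.range m).map W).count i)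
          + F (k + W m) := by
      have h1 : ∀ i ∈ Finset.Icc 1 n,
          F (k + i) * (((List.range m).map W) ++ [W m]).count i
          = F (k + i) * ((List.range m).map W).count i
            + (if i = W m then F (k + i) else 0) := by
        intro i _
        rw [List.count_append, hcnt i]
        by_cases h : i = W m
        · simp [h]
          ring
        · simp [h]
      rw [Finset.sum_congr rfl h1, Finset.sum_add_distrib,
        Finset.sum_ite_eq' (Finset.Icc 1 n) (W m) (fun i => F (k + i)),
        if_pos (Finset.mem_Icc.mpr ⟨(Wmem m).1, (Wmem m).2⟩)]
    rw [key]
    omega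
  -- every Gf m is in X_{n,k}
  have GmemX : ∀ m, MemXnk n k F (Gf m) := by
    intro m
    obtain ⟨E, hEn, hEp, _, hEs⟩ := exD m
    haveI : IsTrans ℕ (fun a b => a + n ≤ b) := ⟨fun a b c h1 h2 => by omega⟩
    refine ⟨by have := Fpos k (by omega); simp only [hGf]; omega,
      k :: (E.reverse.map (fun c => c + k)), ⟨?_, ?_, ?_⟩, List.mem_cons_self, ?_⟩
    · intro c hc
      rcases List.mem_cons.mp hc with rfl | hc
      · omega
      · obtain ⟨e, he, rfl⟩ := List.mem_map.mp hc
        have := hEn e (List.mem_reverse.mp he)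
        omega
    · rw [List.Chain', List.isChain_iff_pairwise]
      refine List.pairwise_cons.mpr ⟨?_, ?_⟩
      · intro c hc
        obtain ⟨e, he, rfl⟩ := List.mem_map.mp hc
        have := hEn e (List.mem_reverse.mp he)
        omega
      · rw [List.pairwise_map, List.pairwise_reverse]
        exact hEp.imp (fun h => by omega)
    · simp only [List.map_cons, List.map_map, List.sum_cons]
      have h1 : ((E.reverse).map (F ∘ fun c => c + k)).sum
          = (E.map (fun c => F (k + c))).sum := by
        rw [List.map_reverse, List.sum_reverse]
        exact congrArg List.sum (List.map_congr_left (fun c _ => by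
          simp only [Function.comp_apply]
          rw [Nat.add_comm]))
      rw [h1]
      have h2 := starstar E hEn hEp
      rw [hEs] at h2
      simp only [hGf]
      rw [h2]
    · intro c hc
      rcases List.mem_cons.mp hc with rfl | hc
      · exact le_rfl
      · obtain ⟨e, he, rfl⟩ := List.mem_map.mp hc
        have := hEn e (List.mem_reverse.mp he)
        omega
  -- every element of X_{n,k} is some Gf m
  have Gsurj : ∀ x, MemXnk n k F x → ∃ m, Gf m = x := by
    intro x hx
    obtain ⟨hxpos, L, ⟨hLn, hLc, hLs⟩, hkL, hkmin⟩ := hx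
    haveI : IsTrans ℕ (fun a b => a + n ≤ b) := ⟨fun a b c h1 h2 => by omega⟩
    rw [List.Chain', List.isChain_iff_pairwise] at hLc
    obtain ⟨h, T, rfl⟩ : ∃ h T, L = h :: T := by
      cases L with
      | nil => simp at hkL
      | cons h T => exact ⟨h, T, rfl⟩
    obtain ⟨hhT, hT⟩ := List.pairwise_cons.mp hLc
    have hhk : h = k := by
      rcases List.mem_cons.mp hkL with rfl | hkT
      · rfl
      · have h1 := hhT k hkT
        have h2 := hkmin h (List.mem_cons_self)
        omega
    rw [hhk] at hhT hLs
    have hTk : ∀ t ∈ T, k + n ≤ t := fun t ht => hhT t ht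
    set E := (T.map (fun t => t - k)).reverse with hE
    have hEn : ∀ c ∈ E, n ≤ c := by
      intro c hc
      rw [hE, List.mem_reverse] at hc
      obtain ⟨t, ht, rfl⟩ := List.mem_map.mp hc
      have := hTk t ht
      omega
    have hEp : E.Pairwise (fun a b => b + n ≤ a) := by
      rw [hE, List.pairwise_reverse, List.pairwise_map]
      exact hT.imp_of_mem (fun ha hb hab => by
        have := hTk _ ha
        omega)
    refine ⟨(E.map F).sum, ?_⟩
    have h2 := starstar E hEn hEp
    simp only [hGf]
    rw [h2, ← hLs]
    simp only [List.map_cons, List.sum_cons]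
    congr 1
    rw [hE]
    rw [List.map_reverse, List.sum_reverse, List.map_map]
    exact congrArg List.sum (List.map_congr_left (fun t ht => by
      have h3 := hTk t ht
      have h4 : k + (t - k) = t := by omega
      simp only [Function.comp_apply]
      rw [h4]))
  -- conclude: the two strictly monotone enumerations agree
  have Qmono : StrictMono (fun m => q (m + 1)) :=
    strictMono_nat_of_lt_succ (fun m => hq_mono (m + 1) (by omega))
  have Gmono : StrictMono Gf := by
    apply strictMono_nat_of_lt_succ
    intro m
    rw [Gstep m]
    have := Fpos (k + W m) (by omega)
    omega
  have hrange : Set.range (fun m => q (m + 1)) = Set.range Gf := by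
    ext x
    constructor
    · rintro ⟨m, rfl⟩
      exact Gsurj (q (m + 1)) (hq_mem (m + 1) (by omega))
    · rintro ⟨m, rfl⟩
      obtain ⟨r, hr1, hr2⟩ := hq_surj (Gf m) (GmemX m)
      refine ⟨r - 1, ?_⟩
      simp only
      rw [Nat.sub_add_cancel hr1]
      exact hr2
  have hfinal := (StrictMono.range_inj Qmono Gmono).mp hrange
  intro m
  have h := congrFun hfinal m
  simpa only [hGf] using h
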